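/- Let F be a twice continuously differentiable distribution function on [s,t] with density f = F′ and f′ = F″. Define R(s,t) = (1/2)(F(t)+F(s))(t−s) − ∫_s^t F(u) du. Then R(s,t) ≤ (1/12) f′(s)(t−s)^3 + (1/24) (sup_{s≤x≤t} f″(x)) (t−s)^4 and R(s,t) ≥ (1/12) f′(s)(t−s)^3 + (1/24) (inf_{s≤x≤t} f″(x)) (t−s)^4. -/

import Mathlib

open Set MeasureTheory intervalIntegral

/-- If `g` is continuous on `[s,t]` with nonpositive derivative on the interior,
then `g x ≤ g s` on `[s,t]`. -/
lemma aux_le (g g' : ℝ → ℝ) (s t : ℝ) (hst : s ≤ t)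
    (hc : ContinuousOn g (Set.Icc s t))
    (hd : ∀ x ∈ Set.Ioo s t, HasDerivAt g (g' x) x)
    (h0 : ∀ x ∈ Set.Ioo s t, g' x ≤ 0) :
    ∀ x ∈ Set.Icc s t, g x ≤ g s := by
  have hanti : AntitoneOn g (Set.Icc s t) := by
    apply antitoneOn_of_deriv_nonpos (convex_Icc s t) hc
    · intro x hx
      rw [interior_Icc] at hx
      exact (hd x hx).differentiableAt.differentiableWithinAt
    · intro x hx
      rw [interior_Icc] at hx
      rw [(hd x hx).deriv]
      exact h0 x hx
  intro x hx
  exact hanti (left_mem_Icc.2 hst) hx hx.1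

/-- One-sided trapezoid error bound. -/
lemma trap_le (F f f' f'' : ℝ → ℝ) (s t M : ℝ) (hst : s < t)
    (hF : ∀ x ∈ Set.Icc s t, HasDerivAt F (f x) x)
    (hf : ∀ x ∈ Set.Icc s t, HasDerivAt f (f' x) x)
    (hf' : ∀ x ∈ Set.Icc s t, HasDerivAt f' (f'' x) x)
    (hM : ∀ x ∈ Set.Icc s t, f'' x ≤ M) :
    (1 / 2) * (F t + F s) * (t - s) - (∫ u in s..t, F u)
        ≤ (1 / 12) * f' s * (t - s) ^ 3 + (1 / 24) * M * (t - s) ^ 4 := by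
  have hstle : s ≤ t := hst.le
  have ContF : ContinuousOn F (Set.Icc s t) :=
    fun x hx => (hF x hx).continuousAt.continuousWithinAt
  have Contf : ContinuousOn f (Set.Icc s t) :=
    fun x hx => (hf x hx).continuousAt.continuousWithinAt
  have Contf' : ContinuousOn f' (Set.Icc s t) :=
    fun x hx => (hf' x hx).continuousAt.continuousWithinAt
  -- Step A : f' x - f' s ≤ M * (x - s) on Icc
  have stepA : ∀ x ∈ Set.Icc s t, f' x - f' s - M * (x - s) ≤ 0 := by
    have := aux_le (fun x => f' x - f' s - M * (x - s)) (fun x => f'' x - M) s t hstle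
      (by
        apply ContinuousOn.sub (Contf'.sub continuousOn_const)
        exact (continuous_const.mul (continuous_id.sub continuous_const)).continuousOn)
      (by
        intro x hx
        have h1 : HasDerivAt (fun x => f' x - f' s) (f'' x) x :=
          (hf' x (Ioo_subset_Icc_self hx)).sub_const _
        have h2 : HasDerivAt (fun x : ℝ => M * (x - s)) M x := by
          simpa using ((hasDerivAt_id x).sub_const s).const_mul M
        exact h1.sub h2)
      (by intro x hx; simpa using hM x (Ioo_subset_Icc_self hx))
    intro x hx
    simpa using this x hx
  -- Step B : G1 ≤ 0 on Icc
  set G1 : ℝ → ℝ := fun x => 1/2 * f x * (x - s) - 1/2 * (F x - F s)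
      - 1/4 * f' s * (x - s)^2 - 1/6 * M * (x - s)^3 with hG1def
  have stepB : ∀ x ∈ Set.Icc s t, G1 x ≤ 0 := by
    have key := aux_le G1 (fun x => 1/2 * (f' x - f' s) * (x - s) - 1/2 * M * (x - s)^2) s t hstle
      (by
        apply ContinuousOn.sub
        apply ContinuousOn.sub
        apply ContinuousOn.sub
        · exact (continuousOn_const.mul Contf).mul
            (continuous_id.sub continuous_const).continuousOn
        · exact continuousOn_const.mul (ContF.sub continuousOn_const)
        · exact (continuous_const.mul ((continuous_id.sub continuous_const).pow 2)).continuousOn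
        · exact (continuous_const.mul ((continuous_id.sub continuous_const).pow 3)).continuousOn)
      (by
        intro x hx
        have hxI := Ioo_subset_Icc_self hx
        have h1 : HasDerivAt (fun x => 1/2 * f x * (x - s))
            ((1/2 * f' x) * (x - s) + (1/2 * f x) * 1) x :=
          ((hf x hxI).const_mul (1/2)).mul ((hasDerivAt_id x).sub_const s)
        have h2 : HasDerivAt (fun x => 1/2 * (F x - F s)) (1/2 * f x) x :=
          ((hF x hxI).sub_const _).const_mul (1/2)
        have h3 : HasDerivAt (fun x : ℝ => 1/4 * f' s * (x - s)^2)
            (1/4 * f' s * (2 * (x - s)^1 * 1)) x :=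
          (((hasDerivAt_id x).sub_const s).pow 2).const_mul (1/4 * f' s)
        have h4 : HasDerivAt (fun x : ℝ => 1/6 * M * (x - s)^3)
            (1/6 * M * (3 * (x - s)^2 * 1)) x :=
          (((hasDerivAt_id x).sub_const s).pow 3).const_mul (1/6 * M)
        have := ((h1.sub h2).sub h3).sub h4
        refine this.congr_deriv ?_
        ring)
      (by
        intro x hx
        have hx0 : 0 ≤ x - s := sub_nonneg.2 hx.1.le
        have hA := stepA x (Ioo_subset_Icc_self hx)
        nlinarith [sq_nonneg (x - s)])
    intro x hx
    have hs0 : G1 s = 0 := by simp [hG1def]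
    have := key x hx
    rwa [hs0] at this
  -- Step C : main function G ≤ 0 at t
  set I : ℝ → ℝ := fun x => ∫ u in s..x, F u with hIdef
  have hIcont : ContinuousOn I (Set.Icc s t) := by
    have : IntegrableOn F (Set.uIcc s t) volume := by
      rw [Set.uIcc_of_le hstle]
      exact ContF.integrableOn_compact isCompact_Icc
    have := continuousOn_primitive_interval this
    rwa [Set.uIcc_of_le hstle] at this
  have hIderiv : ∀ x ∈ Set.Ioo s t, HasDerivAt I (F x) x := by
    intro x hx
    have hxI := Ioo_subset_Icc_self hx
    have hint : IntervalIntegrable F volume s x := by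
      apply ContinuousOn.intervalIntegrable
      rw [Set.uIcc_of_le hx.1.le]
      exact ContF.mono (Set.Icc_subset_Icc le_rfl hx.2.le)
    have hmeas : StronglyMeasurableAtFilter F (nhds x) volume :=
      (ContF.mono Set.Ioo_subset_Icc_self).stronglyMeasurableAtFilter isOpen_Ioo x hx
    exact intervalIntegral.integral_hasDerivAt_right hint hmeas
      (hF x hxI).continuousAt
  set G : ℝ → ℝ := fun x => 1/2 * (F x + F s) * (x - s) - I x
      - 1/12 * f' s * (x - s)^3 - 1/24 * M * (x - s)^4 with hGdef
  have key := aux_le G G1 s t hstle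
    (by
      apply ContinuousOn.sub
      apply ContinuousOn.sub
      apply ContinuousOn.sub
      · exact (continuousOn_const.mul (ContF.add continuousOn_const)).mul
          (continuous_id.sub continuous_const).continuousOn
      · exact hIcont
      · exact (continuous_const.mul ((continuous_id.sub continuous_const).pow 3)).continuousOn
      · exact (continuous_const.mul ((continuous_id.sub continuous_const).pow 4)).continuousOn)
    (by
      intro x hx
      have hxI := Ioo_subset_Icc_self hx
      have h1 : HasDerivAt (fun x => 1/2 * (F x + F s) * (x - s))
          ((1/2 * f x) * (x - s) + (1/2 * (F x + F s)) * 1) x :=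
        (((hF x hxI).add_const _).const_mul (1/2)).mul ((hasDerivAt_id x).sub_const s)
      have h3 : HasDerivAt (fun x : ℝ => 1/12 * f' s * (x - s)^3)
          (1/12 * f' s * (3 * (x - s)^2 * 1)) x :=
        (((hasDerivAt_id x).sub_const s).pow 3).const_mul (1/12 * f' s)
      have h4 : HasDerivAt (fun x : ℝ => 1/24 * M * (x - s)^4)
          (1/24 * M * (4 * (x - s)^3 * 1)) x :=
        (((hasDerivAt_id x).sub_const s).pow 4).const_mul (1/24 * M)
      have := ((h1.sub (hIderiv x hx)).sub h3).sub h4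
      refine this.congr_deriv ?_
      simp only [hG1def]
      ring)
    (fun x hx => stepB x (Ioo_subset_Icc_self hx))
  have hGs : G s = 0 := by simp [hGdef, hIdef]
  have := key t (right_mem_Icc.2 hstle)
  rw [hGs] at this
  simp only [hGdef, hIdef] at this
  linarith

/-- Lemma 4.4: trapezoid-rule error bounds for a C³ distribution function. -/
theorem stmt_2 (F f f' f'' : ℝ → ℝ) (s t : ℝ) (hst : s < t)
    (hF : ∀ x ∈ Set.Icc s t, HasDerivAt F (f x) x)
    (hf : ∀ x ∈ Set.Icc s t, HasDerivAt f (f' x) x)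
    (hf' : ∀ x ∈ Set.Icc s t, HasDerivAt f' (f'' x) x)
    (hf'' : ContinuousOn f'' (Set.Icc s t)) :
    (1 / 2) * (F t + F s) * (t - s) - (∫ u in s..t, F u)
        ≤ (1 / 12) * f' s * (t - s) ^ 3
          + (1 / 24) * sSup (f'' '' Set.Icc s t) * (t - s) ^ 4
    ∧ (1 / 2) * (F t + F s) * (t - s) - (∫ u in s..t, F u)
        ≥ (1 / 12) * f' s * (t - s) ^ 3
          + (1 / 24) * sInf (f'' '' Set.Icc s t) * (t - s) ^ 4 := by
  have hcomp : IsCompact (f'' '' Set.Icc s t) :=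
    isCompact_Icc.image_of_continuousOn hf''
  have hbddA : BddAbove (f'' '' Set.Icc s t) := hcomp.bddAbove
  have hbddB : BddBelow (f'' '' Set.Icc s t) := hcomp.bddBelow
  constructor
  · exact trap_le F f f' f'' s t _ hst hF hf hf'
      (fun x hx => le_csSup hbddA ⟨x, hx, rfl⟩)
  · have := trap_le (fun x => -F x) (fun x => -f x) (fun x => -f' x) (fun x => -f'' x)
      s t (-sInf (f'' '' Set.Icc s t)) hst
      (fun x hx => (hF x hx).neg) (fun x hx => (hf x hx).neg) (fun x hx => (hf' x hx).neg)
      (fun x hx => neg_le_neg (csInf_le hbddB ⟨x, hx, rfl⟩))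
    rw [intervalIntegral.integral_neg] at this
    simp only [ge_iff_le]
    linarith
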